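/- Define h(ρ) = (12/π²) ∫_{-1}^{ρ} arccos(σ²/(3-2σ²)) / √(3-σ²) dσ - 1 for ρ ∈ [-1,1]. Then h(1) = 1, h is odd, continuous, and strictly increasing on [-1,1]. -/

import Mathlib

open Real Set
noncomputable section

/-- The correlation function of the 2-bit orthant protocol:
h(ρ) = (12/π²) ∫_{-1}^{ρ} arccos(σ²/(3-2σ²))/√(3-σ²) dσ - 1. -/
def hOrt2 (ρ : ℝ) : ℝ :=
  (12 / π ^ 2) * (∫ σ in (-1 : ℝ)..ρ, arccos (σ ^ 2 / (3 - 2 * σ ^ 2)) / Real.sqrt (3 - σ ^ 2)) - 1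

open MeasureTheory intervalIntegral

def fI (σ : ℝ) : ℝ := arccos (σ ^ 2 / (3 - 2 * σ ^ 2)) / Real.sqrt (3 - σ ^ 2)

def gI (σ s : ℝ) : ℝ :=
  2 * Real.sqrt 3 * Real.sqrt (1 - σ ^ 2) / (3 + 3 * s ^ 2 - (1 + 3 * s ^ 2) * σ ^ 2)
lemma denom_pos {σ s : ℝ} (h : σ ^ 2 ≤ 1) : 2 ≤ 3 + 3 * s ^ 2 - (1 + 3 * s ^ 2) * σ ^ 2 := by
  nlinarith [sq_nonneg s]

lemma L1 {σ : ℝ} (hσ2 : σ ^ 2 ≤ 1) : fI σ = ∫ s in (0:ℝ)..1, gI σ s := by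
  have h1 : (0:ℝ) ≤ 1 - σ ^ 2 := by linarith
  have h3 : (0:ℝ) < 3 - σ ^ 2 := by nlinarith
  have h32 : (0:ℝ) < 3 - 2 * σ ^ 2 := by nlinarith
  set k : ℝ := Real.sqrt 3 * Real.sqrt (1 - σ ^ 2) / Real.sqrt (3 - σ ^ 2) with hk
  have hsq3 : Real.sqrt (3 - σ ^ 2) ^ 2 = 3 - σ ^ 2 := Real.sq_sqrt h3.le
  have hsq3pos : 0 < Real.sqrt (3 - σ ^ 2) := Real.sqrt_pos.2 h3
  have hk2 : k ^ 2 = 3 * (1 - σ ^ 2) / (3 - σ ^ 2) := by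
    rw [hk, div_pow, mul_pow, Real.sq_sqrt (by norm_num : (0:ℝ) ≤ 3),
      Real.sq_sqrt h1, hsq3]
  have hknn : 0 ≤ k :=
    div_nonneg (mul_nonneg (Real.sqrt_nonneg _) (Real.sqrt_nonneg _)) (Real.sqrt_nonneg _)
  -- step 1 : the inner integral equals (2/√(3-σ²)) * arctan k
  have hderiv : ∀ s : ℝ, HasDerivAt (fun s => 2 / Real.sqrt (3 - σ ^ 2) * arctan (k * s))
      (gI σ s) s := by
    intro s
    have h1' : HasDerivAt (fun s : ℝ => k * s) k s := by
      simpa using (hasDerivAt_id s).const_mul k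
    have h2' : HasDerivAt (fun s => arctan (k * s)) (1 / (1 + (k * s) ^ 2) * k) s :=
      (Real.hasDerivAt_arctan (k * s)).comp s h1'
    have h3' := h2'.const_mul (2 / Real.sqrt (3 - σ ^ 2))
    refine h3'.congr_deriv ?_
    symm
    have hden : 3 + 3 * s ^ 2 - (1 + 3 * s ^ 2) * σ ^ 2 =
        (3 - σ ^ 2) * (1 + (k * s) ^ 2) := by
      rw [mul_pow, hk2]
      field_simp
      ring
    rw [gI, hden]
    rw [show (k*s)^2 = k^2 * s^2 by ring, hk2]
    rw [hk]
    field_simp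
    linear_combination (Real.sqrt (1 - σ ^ 2)) * hsq3
  have hcont : Continuous (fun s => gI σ s) := by
    apply Continuous.div (by continuity) (by continuity)
    intro s
    have := denom_pos (σ := σ) (s := s) hσ2
    linarith
  have hint : ∫ s in (0:ℝ)..1, gI σ s
      = 2 / Real.sqrt (3 - σ ^ 2) * arctan (k * 1) - 2 / Real.sqrt (3 - σ ^ 2) * arctan (k * 0) := by
    exact integral_eq_sub_of_hasDerivAt (fun s _ => hderiv s)
      (hcont.intervalIntegrable 0 1)
  rw [hint]
  simp only [mul_one, mul_zero, arctan_zero]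
  -- step 2 : arccos (σ²/(3-2σ²)) = 2 * arctan k
  have harccos : arccos (σ ^ 2 / (3 - 2 * σ ^ 2)) = 2 * arctan k := by
    have hrange : 0 ≤ 2 * arctan k ∧ 2 * arctan k ≤ π := by
      constructor
      · have h0 : Real.arctan 0 ≤ Real.arctan k := Real.arctan_strictMono.monotone hknn
        rw [Real.arctan_zero] at h0
        linarith
      · have := Real.arctan_lt_pi_div_two k
        linarith
    have hcos : Real.cos (2 * arctan k) = σ ^ 2 / (3 - 2 * σ ^ 2) := by
      rw [Real.cos_two_mul, Real.cos_sq_arctan, hk2]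
      field_simp
      ring
    rw [← hcos, Real.arccos_cos hrange.1 hrange.2]
  rw [fI, harccos]
  ring
set_option maxHeartbeats 2000000 in
lemma L2 (s : ℝ) : ∫ σ in (-1:ℝ)..1, gI σ s
    = 2 * π * Real.sqrt 3 / (1 + 3 * s ^ 2)
      - 2 * π * Real.sqrt 2 / ((1 + 3 * s ^ 2) * Real.sqrt (1 + s ^ 2)) := by
  set d : ℝ := 1 + 3 * s ^ 2 with hd_def
  set c : ℝ := 3 + 3 * s ^ 2 with hc_def
  have hd : (0:ℝ) < d := by positivity
  have hc : (0:ℝ) < c := by positivity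
  have hcd : c = d + 2 := by rw [hd_def, hc_def]; ring
  set F : ℝ → ℝ := fun σ => (2 * Real.sqrt 3 / d) *
    (arcsin σ - (2 / Real.sqrt (2 * c)) *
      arcsin (Real.sqrt 2 * σ / Real.sqrt (c - d * σ ^ 2))) with hF
  have hwpos : ∀ σ : ℝ, σ ^ 2 ≤ 1 → (0:ℝ) < c - d * σ ^ 2 := by
    intro σ h; nlinarith
  -- continuity of F on Icc
  have hFcont : ContinuousOn F (Icc (-1:ℝ) 1) := by
    apply ContinuousOn.mul continuousOn_const
    apply ContinuousOn.sub (Real.continuous_arcsin.continuousOn)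
    apply ContinuousOn.mul continuousOn_const
    apply Real.continuous_arcsin.comp_continuousOn
    apply ContinuousOn.div (by fun_prop) (by fun_prop)
    intro σ hσ
    have h1 : σ ^ 2 ≤ 1 := by rcases hσ with ⟨h1, h2⟩; nlinarith
    exact (Real.sqrt_pos.2 (hwpos σ h1)).ne'
  -- derivative of F on Ioo
  have hFderiv : ∀ σ ∈ Ioo (-1:ℝ) 1, HasDerivAt F (gI σ s) σ := by
    intro σ hσ
    obtain ⟨ha, hb⟩ := hσ
    have hσ2 : σ ^ 2 < 1 := by nlinarith
    have h1σ : (0:ℝ) < 1 - σ ^ 2 := by linarith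
    set w : ℝ := c - d * σ ^ 2 with hw_def
    have hw : (0:ℝ) < w := hwpos σ hσ2.le
    set W : ℝ := Real.sqrt w with hW_def
    set A : ℝ := Real.sqrt (1 - σ ^ 2) with hA_def
    set C : ℝ := Real.sqrt c with hC_def
    set S2 : ℝ := Real.sqrt 2 with hS2_def
    have hWpos : 0 < W := Real.sqrt_pos.2 hw
    have hApos : 0 < A := Real.sqrt_pos.2 h1σ
    have hCpos : 0 < C := Real.sqrt_pos.2 hc
    have hS2pos : 0 < S2 := Real.sqrt_pos.2 (by norm_num)
    have hW2 : W ^ 2 = w := Real.sq_sqrt hw.le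
    have hA2 : A ^ 2 = 1 - σ ^ 2 := Real.sq_sqrt h1σ.le
    have hC2 : C ^ 2 = c := Real.sq_sqrt hc.le
    have hS22 : S2 ^ 2 = 2 := Real.sq_sqrt (by norm_num)
    -- derivative of inner sqrt
    have hpoly : HasDerivAt (fun σ : ℝ => c - d * σ ^ 2) (-(2 * d * σ)) σ := by
      have := ((hasDerivAt_pow 2 σ).const_mul d).const_sub c
      simpa using this.congr_deriv (by ring)
    have hsqrtw : HasDerivAt (fun σ : ℝ => Real.sqrt (c - d * σ ^ 2))
        (-(2 * d * σ) / (2 * W)) σ := by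
      have := (Real.hasDerivAt_sqrt hw.ne').comp σ hpoly
      exact this.congr_deriv (by rw [hW_def]; ring)
    have hnum : HasDerivAt (fun σ : ℝ => S2 * σ) S2 σ := by
      simpa using (hasDerivAt_id σ).const_mul S2
    set u : ℝ := S2 * σ / W with hu_def
    set u' : ℝ := (S2 * W - S2 * σ * (-(2 * d * σ) / (2 * W))) / W ^ 2 with hu'_def
    have hu : HasDerivAt (fun σ : ℝ => S2 * σ / Real.sqrt (c - d * σ ^ 2)) u' σ := by
      exact hnum.div hsqrtw hWpos.ne'
    have hu2 : u ^ 2 < 1 := by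
      rw [hu_def, div_pow, mul_pow, hS22, hW2]
      rw [div_lt_one hw]
      nlinarith
    have hult : u < 1 := by nlinarith [sq_nonneg (u - 1)]
    have hugt : -1 < u := by nlinarith [sq_nonneg (u + 1)]
    have hune1 : u ≠ 1 := hult.ne
    have hunem1 : u ≠ -1 := hugt.ne'
    have harc : HasDerivAt (fun σ : ℝ =>
        arcsin (S2 * σ / Real.sqrt (c - d * σ ^ 2)))
        (1 / Real.sqrt (1 - u ^ 2) * u') σ := by
      exact (Real.hasDerivAt_arcsin hunem1 hune1).comp σ hu
    -- simplify the derivative of the arcsin ∘ u part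
    have hCW : C ^ 2 = W ^ 2 + d * σ ^ 2 := by
      rw [hW2, hC2, hw_def]; ring
    have hW2s : W ^ 2 = 3 + 3 * s ^ 2 - (1 + 3 * s ^ 2) * σ ^ 2 := by
      rw [hW2, hw_def, hc_def, hd_def]
    have h1mu : 1 - u ^ 2 = c * (1 - σ ^ 2) / w := by
      rw [hu_def, div_pow, mul_pow, hS22, ← hC2, ← hW2, hCW]
      field_simp
      linear_combination σ ^ 2 * hW2s
    have hsqrt1mu : Real.sqrt (1 - u ^ 2) = C * A / W := by
      rw [h1mu, ← hC2, ← hA2, ← hW2, ← mul_pow, ← div_pow]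
      exact Real.sqrt_sq (by positivity)
    have hu'val : u' = S2 * C ^ 2 / (w * W) := by
      rw [hu'_def, ← hW2, hCW]
      field_simp
      ring
    have hterm : 1 / Real.sqrt (1 - u ^ 2) * u' = S2 * C / (A * w) := by
      rw [hsqrt1mu, hu'val]
      rw [← hW2]
      field_simp
    -- derivative of arcsin itself
    have harcsin : HasDerivAt (fun σ : ℝ => arcsin σ) (1 / Real.sqrt (1 - σ ^ 2)) σ :=
      Real.hasDerivAt_arcsin (by intro h; rw [h] at ha; linarith) (by intro h; rw [h] at hb; linarith)
    have hFd : HasDerivAt F ((2 * Real.sqrt 3 / d) *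
        (1 / Real.sqrt (1 - σ ^ 2) - (2 / Real.sqrt (2 * c)) *
          (1 / Real.sqrt (1 - u ^ 2) * u'))) σ := by
      exact ((harcsin.sub ((harc).const_mul (2 / Real.sqrt (2 * c)))).const_mul
        (2 * Real.sqrt 3 / d))
    convert hFd using 1
    rw [hterm, ← hA_def]
    have h2c : Real.sqrt (2 * c) = S2 * C := by
      rw [hS2_def, hC_def, ← Real.sqrt_mul (by norm_num : (0:ℝ) ≤ 2)]
    rw [h2c, gI, ← hA_def]
    have hwd_eq : d * (1 - σ ^ 2) + 2 = w := by rw [hw_def, hcd]; ring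
    have hdenom : 3 + 3 * s ^ 2 - (1 + 3 * s ^ 2) * σ ^ 2 = w := by
      rw [hw_def, hc_def, hd_def]
    rw [hdenom]
    have hwA : w = d * A ^ 2 + 2 := by rw [hA2, hwd_eq]
    rw [hwA]
    have hdpos : (0:ℝ) < d := hd
    field_simp
    ring
  -- integrability of gI
  have hgcont : ContinuousOn (fun σ => gI σ s) (Icc (-1:ℝ) 1) := by
    apply ContinuousOn.div (by fun_prop) (by fun_prop)
    intro σ hσ
    have h1 : σ ^ 2 ≤ 1 := by rcases hσ with ⟨h1, h2⟩; nlinarith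
    have := denom_pos (s := s) h1
    linarith
  have hgint : IntervalIntegrable (fun σ => gI σ s) volume (-1) 1 := by
    apply ContinuousOn.intervalIntegrable
    rwa [uIcc_of_le (by norm_num : (-1:ℝ) ≤ 1)]
  have key : ∫ σ in (-1:ℝ)..1, gI σ s = F 1 - F (-1) :=
    integral_eq_sub_of_hasDeriv_right_of_le (by norm_num) hFcont
      (fun σ hσ => (hFderiv σ hσ).hasDerivWithinAt) hgint
  rw [key, hF]
  have h2 : c - d * (1:ℝ) ^ 2 = 2 := by rw [hcd]; ring
  have h2' : c - d * (-1:ℝ) ^ 2 = 2 := by rw [hcd]; ring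
  have hS2ne : Real.sqrt 2 ≠ 0 := by positivity
  have e1 : Real.sqrt 2 * (1:ℝ) / Real.sqrt (c - d * (1:ℝ) ^ 2) = 1 := by
    rw [h2, mul_one, div_self hS2ne]
  have e2 : Real.sqrt 2 * (-1:ℝ) / Real.sqrt (c - d * (-1:ℝ) ^ 2) = -1 := by
    rw [h2']; field_simp
  simp only [e1, e2]
  rw [Real.arcsin_one, Real.arcsin_neg_one]
  have h2c : Real.sqrt (2 * c) = Real.sqrt 6 * Real.sqrt (1 + s ^ 2) := by
    rw [show 2 * c = 6 * (1 + s ^ 2) by rw [hc_def]; ring,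
      Real.sqrt_mul (by norm_num : (0:ℝ) ≤ 6)]
  rw [h2c]
  have h6 : Real.sqrt 6 = Real.sqrt 2 * Real.sqrt 3 := by
    rw [show (6:ℝ) = 2 * 3 by norm_num, Real.sqrt_mul (by norm_num : (0:ℝ) ≤ 2)]
  rw [h6]
  have hs1 : (0:ℝ) < Real.sqrt (1 + s ^ 2) := Real.sqrt_pos.2 (by positivity)
  have h3pos : (0:ℝ) < Real.sqrt 3 := Real.sqrt_pos.2 (by norm_num)
  have h2pos : (0:ℝ) < Real.sqrt 2 := Real.sqrt_pos.2 (by norm_num)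
  have hS22 : Real.sqrt 2 ^ 2 = 2 := Real.sq_sqrt (by norm_num)
  have hS32 : Real.sqrt 3 ^ 2 = 3 := Real.sq_sqrt (by norm_num)
  have h22 : Real.sqrt 2 * Real.sqrt 2 = 2 := Real.mul_self_sqrt (by norm_num)
  have h33 : Real.sqrt 3 * Real.sqrt 3 = 3 := Real.mul_self_sqrt (by norm_num)
  field_simp
  linear_combination (8 * π * Real.sqrt 3 * Real.sqrt (1 + s ^ 2) * d ^ 2 + 2
    - 8 * π * Real.sqrt 3 * Real.sqrt (1 + s ^ 2) * (1 + 3 * s ^ 2) ^ 2) * hS22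
lemma L3 : ∫ s in (0:ℝ)..1, (2 * π * Real.sqrt 3 / (1 + 3 * s ^ 2)
      - 2 * π * Real.sqrt 2 / ((1 + 3 * s ^ 2) * Real.sqrt (1 + s ^ 2)))
    = π ^ 2 / 6 := by
  set H : ℝ → ℝ := fun s => 2 * π *
    (arctan (Real.sqrt 3 * s) - arctan (Real.sqrt 2 * s / Real.sqrt (1 + s ^ 2))) with hH
  have hderiv : ∀ s : ℝ, HasDerivAt H (2 * π * Real.sqrt 3 / (1 + 3 * s ^ 2)
      - 2 * π * Real.sqrt 2 / ((1 + 3 * s ^ 2) * Real.sqrt (1 + s ^ 2))) s := by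
    intro s
    have hp : (0:ℝ) < 1 + s ^ 2 := by positivity
    set P : ℝ := Real.sqrt (1 + s ^ 2) with hP_def
    have hPpos : 0 < P := Real.sqrt_pos.2 hp
    have hP2 : P ^ 2 = 1 + s ^ 2 := Real.sq_sqrt hp.le
    have hS32 : Real.sqrt 3 ^ 2 = 3 := Real.sq_sqrt (by norm_num)
    have hS22 : Real.sqrt 2 ^ 2 = 2 := Real.sq_sqrt (by norm_num)
    -- first arctan
    have h1 : HasDerivAt (fun s : ℝ => arctan (Real.sqrt 3 * s))
        (1 / (1 + (Real.sqrt 3 * s) ^ 2) * Real.sqrt 3) s := by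
      exact (Real.hasDerivAt_arctan _).comp s (by simpa using (hasDerivAt_id s).const_mul (Real.sqrt 3))
    -- second arctan
    have hpoly : HasDerivAt (fun s : ℝ => 1 + s ^ 2) (2 * s) s := by
      simpa using (hasDerivAt_pow 2 s).const_add 1
    have hsqrtP : HasDerivAt (fun s : ℝ => Real.sqrt (1 + s ^ 2)) (2 * s / (2 * P)) s := by
      have := (Real.hasDerivAt_sqrt hp.ne').comp s hpoly
      exact this.congr_deriv (by rw [hP_def]; ring)
    have hnum : HasDerivAt (fun s : ℝ => Real.sqrt 2 * s) (Real.sqrt 2) s := by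
      simpa using (hasDerivAt_id s).const_mul (Real.sqrt 2)
    set v' : ℝ := (Real.sqrt 2 * P - Real.sqrt 2 * s * (2 * s / (2 * P))) / P ^ 2 with hv'
    have hv : HasDerivAt (fun s : ℝ => Real.sqrt 2 * s / Real.sqrt (1 + s ^ 2)) v' s :=
      hnum.div hsqrtP hPpos.ne'
    have h2 : HasDerivAt (fun s : ℝ => arctan (Real.sqrt 2 * s / Real.sqrt (1 + s ^ 2)))
        (1 / (1 + (Real.sqrt 2 * s / P) ^ 2) * v') s := by
      exact (Real.hasDerivAt_arctan _).comp s hv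
    have hHd := (h1.sub h2).const_mul (2 * π)
    refine hHd.congr_deriv ?_
    symm
    rw [hv']
    rw [div_pow, mul_pow, mul_pow, hS32, hS22, hP2]
    have h13 : (0:ℝ) < 1 + 3 * s ^ 2 := by positivity
    field_simp
    linear_combination (Real.sqrt 2 * (1 + 3 * s ^ 2)) * hP2
  have hcont : Continuous (fun s : ℝ => 2 * π * Real.sqrt 3 / (1 + 3 * s ^ 2)
      - 2 * π * Real.sqrt 2 / ((1 + 3 * s ^ 2) * Real.sqrt (1 + s ^ 2))) := by
    apply Continuous.sub
    · exact Continuous.div continuous_const (by continuity) (fun s => by positivity)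
    · apply Continuous.div continuous_const (by continuity)
      intro s
      have : 0 < Real.sqrt (1 + s ^ 2) := Real.sqrt_pos.2 (by positivity)
      positivity
  have key := integral_eq_sub_of_hasDerivAt (fun s _ => hderiv s) (hcont.intervalIntegrable 0 1)
  rw [key, hH]
  have e0 : Real.sqrt 2 * (0:ℝ) / Real.sqrt (1 + (0:ℝ) ^ 2) = 0 := by norm_num
  have e1 : Real.sqrt 2 * (1:ℝ) / Real.sqrt (1 + (1:ℝ) ^ 2) = 1 := by
    rw [mul_one, show (1:ℝ) + 1 ^ 2 = 2 by norm_num, div_self (by positivity)]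
  show 2 * π * (arctan (Real.sqrt 3 * 1) - arctan (Real.sqrt 2 * 1 / Real.sqrt (1 + 1 ^ 2)))
      - 2 * π * (arctan (Real.sqrt 3 * 0) - arctan (Real.sqrt 2 * 0 / Real.sqrt (1 + 0 ^ 2)))
      = π ^ 2 / 6
  rw [e0, e1]
  have ha3 : arctan (Real.sqrt 3 * 1) = π / 3 := by
    rw [mul_one, ← Real.tan_pi_div_three]
    exact Real.arctan_tan (by linarith [pi_pos]) (by linarith [pi_pos])
  have ha0 : arctan (Real.sqrt 3 * 0) = 0 := by simp
  rw [ha3, ha0, Real.arctan_one, Real.arctan_zero]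
  ring
lemma L4 : ∫ σ in (-1:ℝ)..1, (∫ s in (0:ℝ)..1, gI σ s)
    = ∫ s in (0:ℝ)..1, (∫ σ in (-1:ℝ)..1, gI σ s) := by
  have hcont : ContinuousOn (Function.uncurry gI) (Icc (-1:ℝ) 1 ×ˢ Icc (0:ℝ) 1) := by
    apply ContinuousOn.div (by fun_prop) (by fun_prop)
    rintro ⟨σ, s⟩ ⟨hσ, _⟩
    have h1 : σ ^ 2 ≤ 1 := by rcases hσ with ⟨h1, h2⟩; nlinarith
    have := denom_pos (s := s) h1
    simp only [Function.uncurry]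
    intro h
    rw [h] at this
    norm_num at this
  have hK : IsCompact (Icc (-1:ℝ) 1 ×ˢ Icc (0:ℝ) 1) := isCompact_Icc.prod isCompact_Icc
  have hint : IntegrableOn (Function.uncurry gI) (Ioc (-1:ℝ) 1 ×ˢ Ioc (0:ℝ) 1) volume :=
    (hcont.integrableOn_compact hK).mono_set
      (prod_mono Ioc_subset_Icc_self Ioc_subset_Icc_self)
  have hint' : Integrable (Function.uncurry gI)
      ((volume.restrict (Ioc (-1:ℝ) 1)).prod (volume.restrict (Ioc (0:ℝ) 1))) := by
    rwa [Measure.prod_restrict, ← Measure.volume_eq_prod]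
  rw [integral_of_le (by norm_num : (-1:ℝ) ≤ 1), integral_of_le (by norm_num : (0:ℝ) ≤ 1)]
  simp_rw [integral_of_le (by norm_num : (0:ℝ) ≤ 1), integral_of_le (by norm_num : (-1:ℝ) ≤ 1)]
  exact MeasureTheory.integral_integral_swap hint'

lemma fIcont : ContinuousOn fI (Icc (-1:ℝ) 1) := by
  apply ContinuousOn.div
  · apply Real.continuous_arccos.comp_continuousOn
    apply ContinuousOn.div (by fun_prop) (by fun_prop)
    intro σ hσ
    have h1 : σ ^ 2 ≤ 1 := by rcases hσ with ⟨h1, h2⟩; nlinarith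
    intro h; nlinarith
  · fun_prop
  · intro σ hσ
    have h1 : σ ^ 2 ≤ 1 := by rcases hσ with ⟨h1, h2⟩; nlinarith
    have : (0:ℝ) < 3 - σ ^ 2 := by nlinarith
    exact (Real.sqrt_pos.2 this).ne'

lemma fIint {a b : ℝ} (ha : a ∈ Icc (-1:ℝ) 1) (hb : b ∈ Icc (-1:ℝ) 1) :
    IntervalIntegrable fI volume a b := by
  apply ContinuousOn.intervalIntegrable
  apply fIcont.mono
  rw [← uIcc_of_le (show (-1:ℝ) ≤ 1 by norm_num)]
  exact uIcc_subset_uIcc (by rwa [uIcc_of_le (show (-1:ℝ) ≤ 1 by norm_num)])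
    (by rwa [uIcc_of_le (show (-1:ℝ) ≤ 1 by norm_num)])

lemma L5 : ∫ σ in (-1:ℝ)..1, fI σ = π ^ 2 / 6 := by
  have h1 : ∫ σ in (-1:ℝ)..1, fI σ = ∫ σ in (-1:ℝ)..1, (∫ s in (0:ℝ)..1, gI σ s) := by
    apply integral_congr
    intro σ hσ
    rw [uIcc_of_le (show (-1:ℝ) ≤ 1 by norm_num)] at hσ
    exact L1 (by rcases hσ with ⟨h1, h2⟩; nlinarith)
  have h2 : ∫ s in (0:ℝ)..1, (∫ σ in (-1:ℝ)..1, gI σ s)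
      = ∫ s in (0:ℝ)..1, (2 * π * Real.sqrt 3 / (1 + 3 * s ^ 2)
        - 2 * π * Real.sqrt 2 / ((1 + 3 * s ^ 2) * Real.sqrt (1 + s ^ 2))) := by
    apply integral_congr
    intro s _
    exact L2 s
  rw [h1, L4, h2, L3]

lemma hOrt2_eq (ρ : ℝ) : hOrt2 ρ = 12 / π ^ 2 * (∫ σ in (-1:ℝ)..ρ, fI σ) - 1 := rfl

theorem stmt_12 :
    hOrt2 1 = 1 ∧ (∀ ρ ∈ Icc (-1 : ℝ) 1, hOrt2 (-ρ) = -hOrt2 ρ) ∧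
      ContinuousOn hOrt2 (Icc (-1 : ℝ) 1) ∧ StrictMonoOn hOrt2 (Icc (-1 : ℝ) 1) := by
  have hπ : (0:ℝ) < π ^ 2 := by positivity
  have h1 : hOrt2 1 = 1 := by
    rw [hOrt2_eq, L5]
    field_simp
    norm_num
  refine ⟨h1, ?_, ?_, ?_⟩
  · -- oddness
    intro ρ hρ
    have heven : ∀ x : ℝ, fI (-x) = fI x := by
      intro x
      have h : (-x) ^ 2 = x ^ 2 := by ring
      rw [fI, fI, h]
    have hsum : (∫ σ in (-1:ℝ)..(-ρ), fI σ) + (∫ σ in (-1:ℝ)..ρ, fI σ) = π ^ 2 / 6 := by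
      have hneg : ∫ σ in (-1:ℝ)..(-ρ), fI σ = ∫ σ in ρ..1, fI σ := by
        rw [← intervalIntegral.integral_comp_neg fI]
        apply integral_congr
        intro x _
        exact heven x
      rw [hneg, add_comm]
      rw [integral_add_adjacent_intervals (fIint (by norm_num) hρ)
        (fIint hρ (by norm_num)), L5]
    rw [hOrt2_eq, hOrt2_eq]
    have : (∫ σ in (-1:ℝ)..(-ρ), fI σ) = π ^ 2 / 6 - ∫ σ in (-1:ℝ)..ρ, fI σ := by
      linarith
    rw [this]
    field_simp
    ring
  · -- continuity
    apply ContinuousOn.sub ?_ continuousOn_const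
    apply ContinuousOn.mul continuousOn_const
    have := intervalIntegral.continuousOn_primitive_interval
      (f := fI) (a := (-1:ℝ)) (b := (1:ℝ)) (μ := volume) ?_
    · rwa [uIcc_of_le (show (-1:ℝ) ≤ 1 by norm_num)] at this
    · rw [uIcc_of_le (show (-1:ℝ) ≤ 1 by norm_num)]
      exact fIcont.integrableOn_compact isCompact_Icc
  · -- strict monotonicity
    intro a ha b hb hab
    rw [hOrt2_eq, hOrt2_eq]
    have hsplit : (∫ σ in (-1:ℝ)..b, fI σ)
        = (∫ σ in (-1:ℝ)..a, fI σ) + ∫ σ in a..b, fI σ :=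
      (integral_add_adjacent_intervals (fIint (by norm_num) ha) (fIint ha hb)).symm
    have hpos : 0 < ∫ σ in a..b, fI σ := by
      apply intervalIntegral.intervalIntegral_pos_of_pos_on (fIint ha hb) _ hab
      intro x hx
      have hx1 : -1 < x := lt_of_le_of_lt ha.1 hx.1
      have hx2 : x < 1 := lt_of_lt_of_le hx.2 hb.2
      have hx2' : x ^ 2 < 1 := by nlinarith
      rw [fI]
      apply div_pos
      · rw [Real.arccos_pos]
        rw [div_lt_one (by nlinarith)]
        nlinarith
      · apply Real.sqrt_pos.2; nlinarith
    rw [hsplit]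
    have h12 : (0:ℝ) < 12 / π ^ 2 := by positivity
    nlinarith [mul_pos h12 hpos]

end
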